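/- Let A be a unital complex Banach algebra, let X be a complex Banach space, and let φ : A × A → X be a continuous ℂ-bilinear map such that φ(a,b) = 0 whenever a, b ∈ A satisfy a∘b = 0. Then φ(a,x) = (1/2)φ(ax, 1) + (1/2)φ(xa, 1) for every a ∈ A and every x in the norm closure of Im(A). -/

import Mathlib

lemma key_idem {A X : Type*} [NormedRing A] [NormedAlgebra ℂ A]
    [NormedAddCommGroup X] [NormedSpace ℂ X]
    (φ : A →L[ℂ] A →L[ℂ] X)
    (h : ∀ a b : A, a * b + b * a = 0 → φ a b = 0)
    (a p : A) (hp : p * p = p) :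
    φ a p = ((1 : ℂ)/2) • φ (a * p) 1 + ((1 : ℂ)/2) • φ (p * a) 1 := by
  set q : A := 1 - p with hq
  have hpq : p * q = 0 := by simp [hq, mul_sub, hp]
  have hqp : q * p = 0 := by simp [hq, sub_mul, hp]
  have H1 : ∀ x : A, p * (q * x) = 0 := fun x => by rw [← mul_assoc, hpq, zero_mul]
  have H2 : ∀ x : A, q * (p * x) = 0 := fun x => by rw [← mul_assoc, hqp, zero_mul]
  have H3 : ∀ x : A, p * (p * x) = p * x := fun x => by rw [← mul_assoc, hp]
  have H4 : ∀ x : A, q * (q * x) = q * x := fun x => by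
    rw [← mul_assoc]; rw [show q * q = q by simp [hq, sub_mul, mul_sub, hp]]
  set u : A := p * (a * p) with hu
  set v : A := p * (a * q) with hv
  set s : A := q * (a * p) with hs
  set t : A := q * (a * q) with ht
  have hone : (1 : A) = p + q := by simp [hq]
  have e1 : φ t p = 0 := by
    apply h
    simp only [ht, mul_assoc, hqp, mul_zero, H1, add_zero]
  have e2 : φ u q = 0 := by
    apply h
    simp only [hu, mul_assoc, hpq, mul_zero, H2, add_zero]
  have hqq : q * q = q := by simp [hq, sub_mul, mul_sub, hp]
  have hvp : v * p = 0 := by rw [hv, mul_assoc, mul_assoc, hqp, mul_zero, mul_zero]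
  have hvq : v * q = v := by rw [hv, mul_assoc, mul_assoc, hqq]
  have hsp : s * p = s := by rw [hs, mul_assoc, mul_assoc, hp]
  have hsq0 : s * q = 0 := by rw [hs, mul_assoc, mul_assoc, hpq, mul_zero, mul_zero]
  have hpv : p * v = v := by rw [hv, H3]
  have hps : p * s = 0 := by rw [hs, H1]
  have hqv : q * v = 0 := by rw [hv, H2]
  have hqs : q * s = s := by rw [hs, H4]
  have e3 : φ (v + s) (p - q) = 0 := by
    apply h
    rw [show (v + s) * (p - q) = v * p - v * q + (s * p - s * q) by noncomm_ring,
        show (p - q) * (v + s) = p * v + p * s - (q * v + q * s) by noncomm_ring,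
        hvp, hvq, hsp, hsq0, hpv, hps, hqv, hqs]
    abel
  have e3' : φ v p + φ s p = φ v q + φ s q := by
    have h2 : (φ v p + φ s p) - (φ v q + φ s q) = φ (v + s) (p - q) := by
      simp only [map_add, map_sub, ContinuousLinearMap.add_apply]
    rw [e3] at h2
    exact sub_eq_zero.mp h2
  have h5 : a = u + v + s + t := by rw [hu, hv, hs, ht, hq]; noncomm_ring
  have hap : a * p = u + s := by rw [hu, hs, hq]; noncomm_ring
  have hpa : p * a = u + v := by rw [hu, hv, hq]; noncomm_ring
  have hsq : φ s q = φ v p + φ s p - φ v q := by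
    rw [e3']; abel
  conv_lhs => rw [h5]
  rw [hap, hpa, hone]
  simp only [map_add, ContinuousLinearMap.add_apply, e1, e2, add_zero, zero_add, hsq]
  module

/-- Proposition 3.4 (first part): if a continuous bilinear map `φ` on a unital complex
Banach algebra vanishes on pairs with zero Jordan product, then
`φ(a,x) = (1/2)φ(ax,1) + (1/2)φ(xa,1)` for all `a ∈ A` and `x` in the norm closure of the
span of idempotents. -/
theorem continuous_bilinear_zero_jordan_product_closure_span_idempotents
    {A X : Type*} [NormedRing A] [NormedAlgebra ℂ A] [CompleteSpace A]
    [NormedAddCommGroup X] [NormedSpace ℂ X] [CompleteSpace X]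
    (φ : A →L[ℂ] A →L[ℂ] X)
    (h : ∀ a b : A, a * b + b * a = 0 → φ a b = 0) :
    ∀ a : A, ∀ x ∈ closure ((Submodule.span ℂ {p : A | p * p = p} : Submodule ℂ A) : Set A),
      φ a x = ((1 : ℂ)/2) • φ (a * x) 1 + ((1 : ℂ)/2) • φ (x * a) 1 := by
  intro a x hx
  set F : A →L[ℂ] X :=
    φ a - ((1 : ℂ)/2) • ((φ.flip 1).comp (ContinuousLinearMap.mul ℂ A a))
        - ((1 : ℂ)/2) • ((φ.flip 1).comp ((ContinuousLinearMap.mul ℂ A).flip a)) with hF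
  have hFval : ∀ y : A, F y = φ a y - ((1 : ℂ)/2) • φ (a * y) 1 - ((1 : ℂ)/2) • φ (y * a) 1 := by
    intro y
    simp [hF, ContinuousLinearMap.sub_apply, ContinuousLinearMap.smul_apply,
      ContinuousLinearMap.comp_apply, ContinuousLinearMap.flip_apply,
      ContinuousLinearMap.mul_apply']
  have hker : (Submodule.span ℂ {p : A | p * p = p} : Set A) ⊆ {y : A | F y = 0} := by
    intro y hy
    have hle : Submodule.span ℂ {p : A | p * p = p} ≤ LinearMap.ker (F : A →ₗ[ℂ] X) :=
      Submodule.span_le.mpr (fun p hp => by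
        simp only [SetLike.mem_coe, LinearMap.mem_ker, ContinuousLinearMap.coe_coe]
        rw [hFval p, key_idem φ h a p hp]
        abel)
    exact hle hy
  have hclosed : IsClosed {y : A | F y = 0} := isClosed_eq F.continuous continuous_const
  have hFx : F x = 0 := closure_minimal hker hclosed hx
  rw [hFval x] at hFx
  have := sub_eq_zero.mp (by rw [← hFx]; abel :
    φ a x - (((1 : ℂ)/2) • φ (a * x) 1 + ((1 : ℂ)/2) • φ (x * a) 1) = 0)
  exact this
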